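/- For every d ≥ 2, n ≥ 1 and m ≥ 1, there exists a parametrized motion planning algorithm for the Fadell–Neuwirth fibration p: F(ℝ^d, n+m) → F(ℝ^d, m) whose domains of continuity are the 2n+m sets W_c = ∪_{j+t=c} A_{j,t}, c = 1,…,2n+m, partitioning E×_B E; consequently TC[p: F(ℝ^d, n+m) → F(ℝ^d, m)] ≤ 2n + m − 1. -/

import Mathlib

noncomputable section

open unitInterval Topology

/-! ### Topological complexity and parametrized topological complexity -/

/-- The free path fibration `X^I → X × X` admits a continuous section over `U`. -/
def PathSecOn (X : Type*) [TopologicalSpace X] (U : Set (X × X)) : Prop :=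
  ∃ s : U → C(unitInterval, X), Continuous s ∧
    ∀ x : U, (s x) 0 = (x : X × X).1 ∧ (s x) 1 = (x : X × X).2

/-- The (reduced) topological complexity of a space `X`: the smallest `k` such that
`X × X` admits an open cover by `k+1` sets, over each of which the free path
fibration `π : X^I → X × X`, `π(γ) = (γ(0), γ(1))`, admits a continuous section. -/
noncomputable def topComplexity (X : Type*) [TopologicalSpace X] : ℕ :=
  sInf {k : ℕ | ∃ U : Fin (k + 1) → Set (X × X),
    (∀ i, IsOpen (U i)) ∧ (⋃ i, U i) = Set.univ ∧ ∀ i, PathSecOn X (U i)}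

/-- The fiberwise product `E ×_B E` of a map `p : E → B` with itself:
pairs `(e, e')` with `p e = p e'`. -/
def FibProd {E B : Type*} (p : E → B) : Set (E × E) := {q | p q.1 = p q.2}

/-- The space `E^I_B` of paths in `E` whose projection to `B` is constant. -/
def VertPaths {E B : Type*} [TopologicalSpace E] (p : E → B) : Set C(unitInterval, E) :=
  {γ | ∀ t, p (γ t) = p (γ 0)}

/-- The fibration `Π : E^I_B → E ×_B E`, `Π(γ) = (γ(0), γ(1))`,
admits a continuous section over the subset `F ⊆ E ×_B E`. -/
def ParamSecOn {E B : Type*} [TopologicalSpace E] (p : E → B) (F : Set ↥(FibProd p)) : Prop :=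
  ∃ s : F → ↥(VertPaths p), Continuous s ∧
    ∀ x : F, ((s x : C(unitInterval, E)) 0 = ((x : ↥(FibProd p)) : E × E).1 ∧
      (s x : C(unitInterval, E)) 1 = ((x : ↥(FibProd p)) : E × E).2)

/-- The parametrized topological complexity `TC[p : E → B]`: the smallest `k` such
that `E ×_B E` admits a partition into `k+1` subsets, over each of which the
fibration `Π : E^I_B → E ×_B E` admits a continuous section. -/
noncomputable def parTC {E B : Type*} [TopologicalSpace E] (p : E → B) : ℕ :=
  sInf {k : ℕ | ∃ F : Fin (k + 1) → Set ↥(FibProd p),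
    (⋃ i, F i) = Set.univ ∧ (Pairwise fun i j => Disjoint (F i) (F j)) ∧
    ∀ i, ParamSecOn p (F i)}

/-- `p : E → B` is a locally trivial fibration (fiber bundle) with fiber `X`. -/
def IsLocTrivFibration {E B : Type*} (X : Type*) [TopologicalSpace E] [TopologicalSpace B]
    [TopologicalSpace X] (p : E → B) : Prop :=
  Continuous p ∧ ∀ b : B, ∃ U : Set B, IsOpen U ∧ b ∈ U ∧
    ∃ φ : ↥(p ⁻¹' U) ≃ₜ U × X, ∀ e : ↥(p ⁻¹' U), ((φ e).1 : B) = p e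

universe u

/-- `X` is an absolute neighborhood retract: whenever `X` is embedded as a closed
subspace of a metrizable space `Y`, some open neighborhood of the image retracts onto it. -/
def IsANR (X : Type u) [TopologicalSpace X] : Prop :=
  ∀ (Y : Type u) (_ : TopologicalSpace Y), TopologicalSpace.MetrizableSpace Y →
    ∀ f : X → Y, Topology.IsClosedEmbedding f →
      ∃ (U : Set Y) (_ : IsOpen U) (hfU : ∀ x, f x ∈ U),
        ∃ r : C(U, X), ∀ x : X, r ⟨f x, hfU x⟩ = x

end
/-! ### Configuration spaces and the Fadell–Neuwirth fibration -/

/-- The configuration space `F(Y, n)` of `n` ordered pairwise distinct points in `Y`. -/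
def Conf (Y : Type*) (n : ℕ) : Set (Fin n → Y) := {z | Function.Injective z}

/-- The Fadell–Neuwirth fibration `p : F(ℝ^d, n+m) → F(ℝ^d, m)` which forgets the
first `n` points (the robots) and remembers the last `m` points (the obstacles). -/
def fadellNeuwirth (d n m : ℕ) :
    ↥(Conf (EuclideanSpace ℝ (Fin d)) (n + m)) → ↥(Conf (EuclideanSpace ℝ (Fin d)) m) :=
  fun z => ⟨fun j => (z : Fin (n + m) → EuclideanSpace ℝ (Fin d)) (Fin.natAdd n j),
    fun j k h => by
      have h2 : Fin.natAdd n j = Fin.natAdd n k := z.2 h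
      rw [Fin.ext_iff] at h2 ⊢
      simpa [Fin.natAdd] using h2⟩

open scoped RealInnerProductSpace

namespace FadellNeuwirthAlgorithm

variable (d n m : ℕ)

/-- The components of a point of `E ×_B E` for the Fadell–Neuwirth fibration:
initial robots, desired robots and the (common) obstacles. -/
def robots (x : ↥(FibProd (fadellNeuwirth d n m))) (i : Fin n) : EuclideanSpace ℝ (Fin d) :=
  x.1.1.1 (Fin.castAdd m i)

def robots' (x : ↥(FibProd (fadellNeuwirth d n m))) (i : Fin n) : EuclideanSpace ℝ (Fin d) :=
  x.1.2.1 (Fin.castAdd m i)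

def obstacles (x : ↥(FibProd (fadellNeuwirth d n m))) (k : Fin m) : EuclideanSpace ℝ (Fin d) :=
  x.1.1.1 (Fin.natAdd n k)

variable (e : EuclideanSpace ℝ (Fin d))

/-- The `2n + m` projections `q(z_i), q(z'_i), q(o_k)` onto the oriented line with unit
direction `e` (identified with `ℝ` in an order-preserving way). -/
noncomputable def projections (x : ↥(FibProd (fadellNeuwirth d n m))) :
    Fin n ⊕ Fin n ⊕ Fin m → ℝ :=
  Sum.elim (fun i => ⟪robots d n m x i, e⟫)
    (Sum.elim (fun i => ⟪robots' d n m x i, e⟫) (fun k => ⟪obstacles d n m x k, e⟫))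

/-- The subset `A_{j,t} ⊆ E ×_B E`: the set of projection points has cardinality `j + t`
and the set of projected obstacles has cardinality `t`. -/
noncomputable def stratum (j t : ℕ) : Set ↥(FibProd (fadellNeuwirth d n m)) :=
  {x | (Set.range (projections d n m e x)).ncard = j + t ∧
    (Set.range fun k : Fin m => ⟪obstacles d n m x k, e⟫).ncard = t}

/-- The set `W_c = ⋃_{j+t=c} A_{j,t}` (with `0 ≤ j ≤ 2n`, `1 ≤ t ≤ m`). -/
noncomputable def aggregate (c : ℕ) : Set ↥(FibProd (fadellNeuwirth d n m)) :=
  ⋃ (j : ℕ) (t : ℕ) (_ : j + t = c ∧ j ≤ 2 * n ∧ 1 ≤ t ∧ t ≤ m), stratum d n m e j t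


/-! ### Auxiliary construction -/

section Aux

variable {d n m : ℕ}

/-- All `2n+m` points of a fiberwise-product configuration. -/
def pts (x : ↥(FibProd (fadellNeuwirth d n m))) :
    Fin n ⊕ Fin n ⊕ Fin m → EuclideanSpace ℝ (Fin d) :=
  Sum.elim (robots d n m x) (Sum.elim (robots' d n m x) (obstacles d n m x))

variable (e f : EuclideanSpace ℝ (Fin d))

lemma projections_eq (x : ↥(FibProd (fadellNeuwirth d n m))) (α : Fin n ⊕ Fin n ⊕ Fin m) :
    projections d n m e x α = ⟪pts x α, e⟫ := by
  rcases α with i | i | k <;> rfl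

/-- The set of pairs of indices with distinct projections. -/
noncomputable def Qset (x : ↥(FibProd (fadellNeuwirth d n m))) :
    Finset ((Fin n ⊕ Fin n ⊕ Fin m) × (Fin n ⊕ Fin n ⊕ Fin m)) :=
  Finset.univ.filter fun p => projections d n m e x p.1 ≠ projections d n m e x p.2

/-- The desingularization scale associated to a set of separated pairs. -/
noncomputable def epsOf (Q : Finset ((Fin n ⊕ Fin n ⊕ Fin m) × (Fin n ⊕ Fin n ⊕ Fin m)))
    (x : ↥(FibProd (fadellNeuwirth d n m))) : ℝ :=
  if hQ : Q.Nonempty then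
    (Q.inf' hQ fun p => |projections d n m e x p.1 - projections d n m e x p.2|) / (2 * n)
  else 1

noncomputable def eps (x : ↥(FibProd (fadellNeuwirth d n m))) : ℝ := epsOf e (Qset e x) x

lemma eps_pos (hn : 0 < n) (x : ↥(FibProd (fadellNeuwirth d n m))) : 0 < eps e x := by
  unfold eps epsOf
  split
  · rename_i hQ
    apply div_pos
    · rw [Finset.lt_inf'_iff]
      intro p hp
      rw [Qset, Finset.mem_filter] at hp
      exact abs_pos.mpr (sub_ne_zero.mpr hp.2)
    · positivity
  · norm_num

lemma eps_gap (x : ↥(FibProd (fadellNeuwirth d n m))) {α β : Fin n ⊕ Fin n ⊕ Fin m}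
    (h : projections d n m e x α ≠ projections d n m e x β) :
    2 * n * eps e x ≤ |projections d n m e x α - projections d n m e x β| := by
  have hmem : (α, β) ∈ Qset e x := Finset.mem_filter.mpr ⟨Finset.mem_univ _, h⟩
  have hQ : (Qset e x).Nonempty := ⟨_, hmem⟩
  have hle := Finset.inf'_le (fun p => |projections d n m e x p.1 - projections d n m e x p.2|)
    hmem
  rw [eps, epsOf, dif_pos hQ]
  rcases Nat.eq_zero_or_pos n with hn | hn
  · simp [hn]
  · have h2n : (0:ℝ) < 2 * n := by positivity
    have : 2 * (n:ℝ) * ((Qset e x).inf' hQ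
        (fun p => |projections d n m e x p.1 - projections d n m e x p.2|) / (2 * n)) =
        (Qset e x).inf' hQ
        (fun p => |projections d n m e x p.1 - projections d n m e x p.2|) := by
      field_simp
    rw [this]
    exact hle
  
/-- A height bound above all current points. -/
noncomputable def Hgt (x : ↥(FibProd (fadellNeuwirth d n m))) : ℝ :=
  if h : (Finset.univ : Finset (Fin n ⊕ Fin n ⊕ Fin m)).Nonempty then
    (Finset.univ.sup' h fun α => ⟪pts x α, f⟫) + 1
  else 0

lemma le_Hgt (x : ↥(FibProd (fadellNeuwirth d n m))) (α : Fin n ⊕ Fin n ⊕ Fin m) :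
    ⟪pts x α, f⟫ + 1 ≤ Hgt f x := by
  have hne : (Finset.univ : Finset (Fin n ⊕ Fin n ⊕ Fin m)).Nonempty := ⟨α, Finset.mem_univ _⟩
  rw [Hgt, dif_pos hne]
  have := Finset.le_sup' (fun α => ⟪pts (d := d) (n := n) (m := m) x α, f⟫) (Finset.mem_univ α)
  linarith

end Aux

section Traj

variable {d n m : ℕ} (e f : EuclideanSpace ℝ (Fin d))

/-- The six waypoints of robot `i`'s journey. -/
noncomputable def wayp (ε : ℝ) (x : ↥(FibProd (fadellNeuwirth d n m))) (i : Fin n) :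
    ℕ → EuclideanSpace ℝ (Fin d) := fun k =>
  match k with
  | 0 => robots d n m x i
  | 1 => robots d n m x i + (((i : ℝ) + 1) * ε) • e
  | 2 => robots d n m x i + (((i : ℝ) + 1) * ε) • e +
      (Hgt f x + ((i : ℝ) + 1) - ⟪robots d n m x i, f⟫) • f
  | 3 => robots' d n m x i + (((i : ℝ) + 1) * ε) • e +
      (Hgt f x + ((i : ℝ) + 1) - ⟪robots' d n m x i, f⟫) • f
  | 4 => robots' d n m x i + (((i : ℝ) + 1) * ε) • e
  | _ => robots' d n m x i

/-- Piecewise-linear trajectory of robot `i` through its waypoints. -/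
noncomputable def robotTraj (ε : ℝ) (x : ↥(FibProd (fadellNeuwirth d n m))) (i : Fin n)
    (t : ℝ) : EuclideanSpace ℝ (Fin d) :=
  wayp e f ε x i 0 + ∑ k ∈ Finset.range 5,
    (max 0 (min 1 (5 * t - k))) • (wayp e f ε x i (k + 1) - wayp e f ε x i k)

/-- The full motion: robots move, obstacles stay put. -/
noncomputable def trajFun (ε : ℝ) (x : ↥(FibProd (fadellNeuwirth d n m))) (t : ℝ) :
    Fin (n + m) → EuclideanSpace ℝ (Fin d) := fun α =>
  if h : (α : ℕ) < n then robotTraj e f ε x ⟨α.1, h⟩ t else x.1.1.1 α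

lemma robotTraj_zero (ε : ℝ) (x : ↥(FibProd (fadellNeuwirth d n m))) (i : Fin n) :
    robotTraj e f ε x i 0 = robots d n m x i := by
  have h : ∀ k ∈ Finset.range 5,
      (max 0 (min 1 (5 * (0:ℝ) - k))) • (wayp e f ε x i (k + 1) - wayp e f ε x i k) = 0 := by
    intro k _
    have h1 : min 1 (5 * (0:ℝ) - k) ≤ 0 := by
      have : (0:ℝ) ≤ k := Nat.cast_nonneg k
      have : 5 * (0:ℝ) - k ≤ 0 := by linarith
      exact le_trans (min_le_right _ _) this
    rw [max_eq_left h1, zero_smul]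
  rw [robotTraj, Finset.sum_congr rfl h]
  simp [wayp]

lemma robotTraj_one (ε : ℝ) (x : ↥(FibProd (fadellNeuwirth d n m))) (i : Fin n) :
    robotTraj e f ε x i 1 = robots' d n m x i := by
  have h : ∀ k ∈ Finset.range 5,
      (max 0 (min 1 (5 * (1:ℝ) - k))) • (wayp e f ε x i (k + 1) - wayp e f ε x i k) =
      wayp e f ε x i (k + 1) - wayp e f ε x i k := by
    intro k hk
    rw [Finset.mem_range] at hk
    have : (k : ℝ) ≤ 4 := by exact_mod_cast Nat.lt_succ_iff.mp hk
    have h1 : min 1 (5 * (1:ℝ) - k) = 1 := min_eq_left (by linarith)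
    rw [h1, max_eq_right zero_le_one, one_smul]
  rw [robotTraj, Finset.sum_congr rfl h, Finset.sum_range_sub (fun k => wayp e f ε x i k)]
  have h5 : wayp e f ε x i 5 = robots' d n m x i := rfl
  have h0 : wayp e f ε x i 0 = robots d n m x i := rfl
  rw [h0, h5]
  abel

/-- At every time, the trajectory is on one of the five segments. -/
lemma exists_segment {t : ℝ} (ht0 : 0 ≤ t) (_ht1 : t ≤ 1) :
    ∃ (kn : ℕ) (s : ℝ), kn < 5 ∧ 0 ≤ s ∧ s ≤ 1 ∧
      ∀ (ε : ℝ) (x : ↥(FibProd (fadellNeuwirth d n m))) (i : Fin n),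
        robotTraj e f ε x i t =
          wayp e f ε x i kn + s • (wayp e f ε x i (kn + 1) - wayp e f ε x i kn) := by
  have h5t0 : 0 ≤ 5 * t := by linarith
  set kn := min (Nat.floor (5 * t)) 4 with hkndef
  have hkn5 : kn < 5 := lt_of_le_of_lt (min_le_right _ _) (by norm_num)
  have hknle : (kn : ℝ) ≤ 5 * t := by
    refine le_trans ?_ (Nat.floor_le h5t0)
    exact_mod_cast min_le_left _ _
  set s := min 1 (5 * t - kn) with hsdef
  have hs0 : 0 ≤ s := le_min zero_le_one (by linarith)
  have hs1 : s ≤ 1 := min_le_left _ _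
  have hlt : ∀ j : ℕ, j < kn → max 0 (min 1 (5 * t - (j : ℝ))) = 1 := by
    intro j hj
    have hj1 : (j : ℝ) + 1 ≤ kn := by exact_mod_cast Nat.succ_le_of_lt hj
    have h1 : (1 : ℝ) ≤ 5 * t - j := by linarith
    rw [min_eq_left h1, max_eq_right zero_le_one]
  have heq : max 0 (min 1 (5 * t - (kn : ℝ))) = s := max_eq_right hs0
  have hgt : ∀ j : ℕ, kn < j → max 0 (min 1 (5 * t - (j : ℝ))) = 0 := by
    intro j hj
    have hle0 : 5 * t - (j : ℝ) ≤ 0 := by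
      rcases le_or_gt (Nat.floor (5 * t)) 4 with h | h
      · have hfl : kn = Nat.floor (5 * t) := min_eq_left h
        have hlt1 : 5 * t < (kn : ℝ) + 1 := by
          rw [hfl]; exact_mod_cast Nat.lt_floor_add_one (5 * t)
        have hjge : (kn : ℝ) + 1 ≤ j := by exact_mod_cast Nat.succ_le_of_lt hj
        linarith
      · have hkn4 : kn = 4 := min_eq_right h.le
        have hj5 : (5 : ℝ) ≤ j := by
          have : 5 ≤ j := by omega
          exact_mod_cast this
        linarith
    rw [max_eq_left (le_trans (min_le_right _ _) hle0)]
  refine ⟨kn, s, hkn5, hs0, hs1, fun ε x i => ?_⟩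
  rw [robotTraj]
  have hkncase : kn = 0 ∨ kn = 1 ∨ kn = 2 ∨ kn = 3 ∨ kn = 4 := by omega
  simp only [Finset.sum_range_succ, Finset.sum_range_zero, zero_add]
  have w := wayp e f ε x i
  rcases hkncase with h | h | h | h | h <;> rw [h] <;> rw [h] at heq
  · rw [heq, hgt 1 (by omega), hgt 2 (by omega), hgt 3 (by omega), hgt 4 (by omega)]
    push_cast
    simp only [zero_smul, add_zero]
  · rw [hlt 0 (by omega), heq, hgt 2 (by omega), hgt 3 (by omega), hgt 4 (by omega)]
    push_cast
    simp only [zero_smul, add_zero, one_smul]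
    abel
  · rw [hlt 0 (by omega), hlt 1 (by omega), heq, hgt 3 (by omega), hgt 4 (by omega)]
    push_cast
    simp only [zero_smul, add_zero, one_smul]
    abel
  · rw [hlt 0 (by omega), hlt 1 (by omega), hlt 2 (by omega), heq, hgt 4 (by omega)]
    push_cast
    simp only [zero_smul, add_zero, one_smul]
    abel
  · rw [hlt 0 (by omega), hlt 1 (by omega), hlt 2 (by omega), hlt 3 (by omega), heq]
    push_cast
    simp only [zero_smul, add_zero, one_smul]
    abel

end Traj

section Facts

variable {d n m : ℕ}

lemma obst_compat (x : ↥(FibProd (fadellNeuwirth d n m))) (k : Fin m) :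
    x.1.1.1 (Fin.natAdd n k) = x.1.2.1 (Fin.natAdd n k) := by
  have h := x.2
  have h2 : fadellNeuwirth d n m x.1.1 = fadellNeuwirth d n m x.1.2 := h
  have h3 := congrFun (congrArg Subtype.val h2) k
  exact h3

lemma robots_ne (x : ↥(FibProd (fadellNeuwirth d n m))) {i j : Fin n} (hij : i ≠ j) :
    robots d n m x i ≠ robots d n m x j := by
  intro h
  have h2 := x.1.1.2 h
  exact hij (Fin.ext (by simpa using congrArg Fin.val h2))

lemma robots'_ne (x : ↥(FibProd (fadellNeuwirth d n m))) {i j : Fin n} (hij : i ≠ j) :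
    robots' d n m x i ≠ robots' d n m x j := by
  intro h
  have h2 := x.1.2.2 h
  exact hij (Fin.ext (by simpa using congrArg Fin.val h2))

lemma robots_ne_obstacles (x : ↥(FibProd (fadellNeuwirth d n m))) (i : Fin n) (k : Fin m) :
    robots d n m x i ≠ obstacles d n m x k := by
  intro h
  have h2 := x.1.1.2 h
  have h3 := congrArg Fin.val h2
  simp [Fin.castAdd, Fin.natAdd] at h3
  omega

lemma robots'_ne_obstacles (x : ↥(FibProd (fadellNeuwirth d n m))) (i : Fin n) (k : Fin m) :
    robots' d n m x i ≠ obstacles d n m x k := by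
  intro h
  rw [obstacles, obst_compat] at h
  have h2 := x.1.2.2 h
  have h3 := congrArg Fin.val h2
  simp [Fin.castAdd, Fin.natAdd] at h3
  omega

lemma obstacles_ne (x : ↥(FibProd (fadellNeuwirth d n m))) {k l : Fin m} (hkl : k ≠ l) :
    obstacles d n m x k ≠ obstacles d n m x l := by
  intro h
  have h2 := x.1.1.2 h
  exact hkl (Fin.ext (by simpa [Fin.natAdd] using congrArg Fin.val h2))

/-- The master arithmetic contradiction: a shifted coincidence of separated values. -/
lemma gap_contra {n : ℕ} {ε va vb a b s : ℝ} (hε : 0 < ε) (hgap : 2 * (n:ℝ) * ε ≤ |va - vb|)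
    (hvne : va ≠ vb) (ha0 : 0 ≤ a) (han : a ≤ n) (hb0 : 0 ≤ b) (hbn : b ≤ n)
    (hs0 : 0 ≤ s) (hs1 : s ≤ 1) (key : va - vb = s * ε * (b - a)) : False := by
  have h3 : 0 < |va - vb| := abs_pos.mpr (sub_ne_zero.mpr hvne)
  have hba : |b - a| ≤ (n:ℝ) := abs_le.mpr ⟨by linarith, by linarith⟩
  have h2 : |va - vb| ≤ (n:ℝ) * ε := by
    rw [key, abs_mul, abs_mul, abs_of_nonneg hs0, abs_of_nonneg hε.le]
    nlinarith [abs_nonneg (b - a), mul_nonneg hs0 hε.le, mul_nonneg hε.le (abs_nonneg (b - a))]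
  linarith

lemma castAdd_mk {n m : ℕ} (α : Fin (n + m)) (h : α.1 < n) :
    Fin.castAdd m ⟨α.1, h⟩ = α := Fin.ext rfl

lemma natAdd_sub {n m : ℕ} (β : Fin (n + m)) (h : n ≤ β.1) :
    Fin.natAdd n ⟨β.1 - n, by have := β.2; omega⟩ = β := by
  apply Fin.ext
  show n + (β.1 - n) = β.1
  omega

end Facts

section Inj

variable {d n m : ℕ} {e f : EuclideanSpace ℝ (Fin d)}

/-- Robot-robot collision-freeness on each segment. -/
lemma seg_rr (he : ‖e‖ = 1) (hf : ‖f‖ = 1) (hef : ⟪e, f⟫ = 0) {ε : ℝ} (hε : 0 < ε)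
    (x : ↥(FibProd (fadellNeuwirth d n m)))
    (hgap : ∀ α β, projections d n m e x α ≠ projections d n m e x β →
      2 * (n:ℝ) * ε ≤ |projections d n m e x α - projections d n m e x β|)
    {kn : ℕ} (hkn : kn < 5) {s : ℝ} (hs0 : 0 ≤ s) (hs1 : s ≤ 1) {i j : Fin n}
    (h : wayp e f ε x i kn + s • (wayp e f ε x i (kn + 1) - wayp e f ε x i kn)
       = wayp e f ε x j kn + s • (wayp e f ε x j (kn + 1) - wayp e f ε x j kn)) : i = j := by
  by_contra hij
  have hee : ⟪e, e⟫ = (1:ℝ) := by rw [real_inner_self_eq_norm_mul_norm, he]; norm_num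
  have hfe : ⟪f, e⟫ = (0:ℝ) := by rw [real_inner_comm]; exact hef
  have hff : ⟪f, f⟫ = (1:ℝ) := by rw [real_inner_self_eq_norm_mul_norm, hf]; norm_num
  have hi0 : (0:ℝ) ≤ (i:ℝ) + 1 := by positivity
  have hj0 : (0:ℝ) ≤ (j:ℝ) + 1 := by positivity
  have hin : (i:ℝ) + 1 ≤ n := by exact_mod_cast i.isLt
  have hjn : (j:ℝ) + 1 ≤ n := by exact_mod_cast j.isLt
  have hgij : ⟪robots d n m x i, e⟫ ≠ ⟪robots d n m x j, e⟫ →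
      2 * (n:ℝ) * ε ≤ |⟪robots d n m x i, e⟫ - ⟪robots d n m x j, e⟫| :=
    hgap (Sum.inl i) (Sum.inl j)
  have hgij' : ⟪robots' d n m x i, e⟫ ≠ ⟪robots' d n m x j, e⟫ →
      2 * (n:ℝ) * ε ≤ |⟪robots' d n m x i, e⟫ - ⟪robots' d n m x j, e⟫| :=
    hgap (Sum.inr (Sum.inl i)) (Sum.inr (Sum.inl j))
  have hcast : ((i:ℝ) + 1 = (j:ℝ) + 1) → False := by
    intro hc
    exact hij (Fin.ext (by exact_mod_cast show ((i.1:ℝ)) = (j.1:ℝ) by linarith))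
  interval_cases kn
  · -- segment 0
    by_cases hv : ⟪robots d n m x i, e⟫ = ⟪robots d n m x j, e⟫
    · by_cases hs : s = 0
      · rw [hs] at h
        simp only [zero_smul, add_zero] at h
        exact robots_ne x hij (by simpa [wayp] using h)
      · have h2 := congrArg (fun u : EuclideanSpace ℝ (Fin d) => ⟪u, e⟫) h
        simp only [wayp, inner_add_left, inner_sub_left, real_inner_smul_left, hee, hfe,
          mul_one, mul_zero, add_zero, zero_add] at h2
        exact hcast (mul_left_cancel₀ (mul_ne_zero hs hε.ne') (by linear_combination h2 - hv))
    · have h2 := congrArg (fun u : EuclideanSpace ℝ (Fin d) => ⟪u, e⟫) h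
      simp only [wayp, inner_add_left, inner_sub_left, real_inner_smul_left, hee, hfe,
        mul_one, mul_zero, add_zero, zero_add] at h2
      exact gap_contra hε (hgij hv) hv hi0 hin hj0 hjn hs0 hs1 (by linear_combination h2)
  · -- segment 1 : constant e-projection lanes
    have h2 := congrArg (fun u : EuclideanSpace ℝ (Fin d) => ⟪u, e⟫) h
    simp only [wayp, inner_add_left, inner_sub_left, real_inner_smul_left, hee, hfe,
      mul_one, mul_zero, add_zero, zero_add] at h2
    by_cases hv : ⟪robots d n m x i, e⟫ = ⟪robots d n m x j, e⟫
    · exact hcast (mul_right_cancel₀ hε.ne' (by linear_combination h2 - hv))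
    · exact gap_contra hε (hgij hv) hv hi0 hin hj0 hjn zero_le_one le_rfl
        (by linear_combination h2)
  · -- segment 2 : distinct heights
    have h2 := congrArg (fun u : EuclideanSpace ℝ (Fin d) => ⟪u, f⟫) h
    simp only [wayp, inner_add_left, inner_sub_left, real_inner_smul_left, hef, hff,
      mul_one, mul_zero, add_zero, zero_add] at h2
    exact hcast (by linear_combination h2)
  · -- segment 3 : constant e-projection lanes
    have h2 := congrArg (fun u : EuclideanSpace ℝ (Fin d) => ⟪u, e⟫) h
    simp only [wayp, inner_add_left, inner_sub_left, real_inner_smul_left, hee, hfe,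
      mul_one, mul_zero, add_zero, zero_add] at h2
    by_cases hv : ⟪robots' d n m x i, e⟫ = ⟪robots' d n m x j, e⟫
    · exact hcast (mul_right_cancel₀ hε.ne' (by linear_combination h2 - hv))
    · exact gap_contra hε (hgij' hv) hv hi0 hin hj0 hjn zero_le_one le_rfl
        (by linear_combination h2)
  · -- segment 4
    by_cases hv : ⟪robots' d n m x i, e⟫ = ⟪robots' d n m x j, e⟫
    · by_cases hs : s = 1
      · rw [hs] at h
        simp only [one_smul] at h
        have h3 : wayp e f ε x i 5 = wayp e f ε x j 5 := by
          have : ∀ i : Fin n, wayp e f ε x i 4 + (wayp e f ε x i (4+1) - wayp e f ε x i 4)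
              = wayp e f ε x i 5 := fun i => by simp only [Nat.reduceAdd]; abel
          rw [← this i, ← this j]; exact h
        exact robots'_ne x hij (by simpa [wayp] using h3)
      · have h2 := congrArg (fun u : EuclideanSpace ℝ (Fin d) => ⟪u, e⟫) h
        simp only [wayp, inner_add_left, inner_sub_left, real_inner_smul_left, hee, hfe,
          mul_one, mul_zero, add_zero, zero_add] at h2
        have hs' : 1 - s ≠ 0 := sub_ne_zero.mpr (Ne.symm hs)
        exact hcast (mul_left_cancel₀ (mul_ne_zero hs' hε.ne')
          (by linear_combination h2 - hv))
    · have h2 := congrArg (fun u : EuclideanSpace ℝ (Fin d) => ⟪u, e⟫) h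
      simp only [wayp, inner_add_left, inner_sub_left, real_inner_smul_left, hee, hfe,
        mul_one, mul_zero, add_zero, zero_add] at h2
      exact gap_contra hε (hgij' hv) hv hi0 hin hj0 hjn (by linarith) (by linarith)
        (show _ - _ = (1 - s) * ε * _ by linear_combination h2)
  
/-- Robot-obstacle collision-freeness on each segment. -/
lemma seg_ro (he : ‖e‖ = 1) (hf : ‖f‖ = 1) (hef : ⟪e, f⟫ = 0) {ε : ℝ} (hε : 0 < ε)
    (x : ↥(FibProd (fadellNeuwirth d n m)))
    (hgap : ∀ α β, projections d n m e x α ≠ projections d n m e x β →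
      2 * (n:ℝ) * ε ≤ |projections d n m e x α - projections d n m e x β|)
    {kn : ℕ} (hkn : kn < 5) {s : ℝ} (hs0 : 0 ≤ s) (hs1 : s ≤ 1) (i : Fin n) (k : Fin m)
    (h : wayp e f ε x i kn + s • (wayp e f ε x i (kn + 1) - wayp e f ε x i kn)
       = obstacles d n m x k) : False := by
  have hee : ⟪e, e⟫ = (1:ℝ) := by rw [real_inner_self_eq_norm_mul_norm, he]; norm_num
  have hfe : ⟪f, e⟫ = (0:ℝ) := by rw [real_inner_comm]; exact hef
  have hff : ⟪f, f⟫ = (1:ℝ) := by rw [real_inner_self_eq_norm_mul_norm, hf]; norm_num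
  have hi0 : (0:ℝ) ≤ (i:ℝ) + 1 := by positivity
  have hin : (i:ℝ) + 1 ≤ n := by exact_mod_cast i.isLt
  have hn0 : (0:ℝ) ≤ (n:ℝ) := Nat.cast_nonneg n
  have hgik : ⟪robots d n m x i, e⟫ ≠ ⟪obstacles d n m x k, e⟫ →
      2 * (n:ℝ) * ε ≤ |⟪robots d n m x i, e⟫ - ⟪obstacles d n m x k, e⟫| :=
    hgap (Sum.inl i) (Sum.inr (Sum.inr k))
  have hgik' : ⟪robots' d n m x i, e⟫ ≠ ⟪obstacles d n m x k, e⟫ →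
      2 * (n:ℝ) * ε ≤ |⟪robots' d n m x i, e⟫ - ⟪obstacles d n m x k, e⟫| :=
    hgap (Sum.inr (Sum.inl i)) (Sum.inr (Sum.inr k))
  have hip : (0:ℝ) < ((i:ℝ) + 1) * ε := by positivity
  have hH := le_Hgt f x (Sum.inr (Sum.inr k))
  rw [show pts (d := d) (n := n) (m := m) x (Sum.inr (Sum.inr k)) = obstacles d n m x k
    from rfl] at hH
  interval_cases kn
  · -- segment 0
    by_cases hv : ⟪robots d n m x i, e⟫ = ⟪obstacles d n m x k, e⟫
    · by_cases hs : s = 0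
      · rw [hs] at h
        simp only [zero_smul, add_zero] at h
        exact robots_ne_obstacles x i k (by simpa [wayp] using h)
      · have h2 := congrArg (fun u : EuclideanSpace ℝ (Fin d) => ⟪u, e⟫) h
        simp only [wayp, inner_add_left, inner_sub_left, real_inner_smul_left, hee, hfe,
          mul_one, mul_zero, add_zero, zero_add] at h2
        have : s * (((i:ℝ) + 1) * ε) = 0 := by linear_combination h2 - hv
        exact (mul_ne_zero hs (by positivity)) this
    · have h2 := congrArg (fun u : EuclideanSpace ℝ (Fin d) => ⟪u, e⟫) h
      simp only [wayp, inner_add_left, inner_sub_left, real_inner_smul_left, hee, hfe,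
        mul_one, mul_zero, add_zero, zero_add] at h2
      exact gap_contra hε (hgik hv) hv hi0 hin le_rfl hn0 hs0 hs1 (by linear_combination h2)
  · -- segment 1
    have h2 := congrArg (fun u : EuclideanSpace ℝ (Fin d) => ⟪u, e⟫) h
    simp only [wayp, inner_add_left, inner_sub_left, real_inner_smul_left, hee, hfe,
      mul_one, mul_zero, add_zero, zero_add] at h2
    by_cases hv : ⟪robots d n m x i, e⟫ = ⟪obstacles d n m x k, e⟫
    · have : ((i:ℝ) + 1) * ε = 0 := by linear_combination h2 - hv
      exact hip.ne' this
    · exact gap_contra hε (hgik hv) hv hi0 hin le_rfl hn0 zero_le_one le_rfl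
        (by linear_combination h2)
  · -- segment 2 : robots fly above all obstacles
    have h2 := congrArg (fun u : EuclideanSpace ℝ (Fin d) => ⟪u, f⟫) h
    simp only [wayp, inner_add_left, inner_sub_left, real_inner_smul_left, hef, hff,
      mul_one, mul_zero, add_zero, zero_add] at h2
    have h3 : Hgt f x + ((i:ℝ) + 1) = ⟪obstacles d n m x k, f⟫ := by linear_combination h2
    linarith
  · -- segment 3
    have h2 := congrArg (fun u : EuclideanSpace ℝ (Fin d) => ⟪u, e⟫) h
    simp only [wayp, inner_add_left, inner_sub_left, real_inner_smul_left, hee, hfe,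
      mul_one, mul_zero, add_zero, zero_add] at h2
    by_cases hv : ⟪robots' d n m x i, e⟫ = ⟪obstacles d n m x k, e⟫
    · have : ((i:ℝ) + 1) * ε = 0 := by linear_combination h2 - hv
      exact hip.ne' this
    · exact gap_contra hε (hgik' hv) hv hi0 hin le_rfl hn0 zero_le_one le_rfl
        (by linear_combination h2)
  · -- segment 4
    by_cases hv : ⟪robots' d n m x i, e⟫ = ⟪obstacles d n m x k, e⟫
    · by_cases hs : s = 1
      · rw [hs] at h
        simp only [one_smul] at h
        have h3 : wayp e f ε x i 5 = obstacles d n m x k := by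
          have h4 : wayp e f ε x i 4 + (wayp e f ε x i (4+1) - wayp e f ε x i 4)
              = wayp e f ε x i 5 := by simp only [Nat.reduceAdd]; abel
          rw [← h4]; exact h
        exact robots'_ne_obstacles x i k (by simpa [wayp] using h3)
      · have h2 := congrArg (fun u : EuclideanSpace ℝ (Fin d) => ⟪u, e⟫) h
        simp only [wayp, inner_add_left, inner_sub_left, real_inner_smul_left, hee, hfe,
          mul_one, mul_zero, add_zero, zero_add] at h2
        have : (1 - s) * (((i:ℝ) + 1) * ε) = 0 := by linear_combination h2 - hv
        exact (mul_ne_zero (sub_ne_zero.mpr (Ne.symm hs)) (by positivity)) this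
    · have h2 := congrArg (fun u : EuclideanSpace ℝ (Fin d) => ⟪u, e⟫) h
      simp only [wayp, inner_add_left, inner_sub_left, real_inner_smul_left, hee, hfe,
        mul_one, mul_zero, add_zero, zero_add] at h2
      exact gap_contra hε (hgik' hv) hv hi0 hin le_rfl hn0 (by linarith) (by linarith)
        (show _ - _ = (1 - s) * ε * _ by linear_combination h2)

end Inj

section Cont

variable {d n m : ℕ} {e f : EuclideanSpace ℝ (Fin d)}

lemma continuous_finset_inf' {X γ : Type*} [TopologicalSpace X] {s : Finset γ}
    (hs : s.Nonempty) {F : γ → X → ℝ} (hF : ∀ a, Continuous (F a)) :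
    Continuous fun x => s.inf' hs fun a => F a x := by
  induction hs using Finset.Nonempty.cons_induction with
  | singleton a => simpa using hF a
  | cons a s ha hs ih =>
      simp only [Finset.inf'_cons hs]
      exact (hF a).min ih

lemma continuous_finset_sup' {X γ : Type*} [TopologicalSpace X] {s : Finset γ}
    (hs : s.Nonempty) {F : γ → X → ℝ} (hF : ∀ a, Continuous (F a)) :
    Continuous fun x => s.sup' hs fun a => F a x := by
  induction hs using Finset.Nonempty.cons_induction with
  | singleton a => simpa using hF a
  | cons a s ha hs ih =>
      simp only [Finset.sup'_cons hs]
      exact (hF a).max ih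

lemma cont_val1 : Continuous fun x : ↥(FibProd (fadellNeuwirth d n m)) => x.1.1.1 :=
  continuous_subtype_val.comp (continuous_fst.comp continuous_subtype_val)

lemma cont_val2 : Continuous fun x : ↥(FibProd (fadellNeuwirth d n m)) => x.1.2.1 :=
  continuous_subtype_val.comp (continuous_snd.comp continuous_subtype_val)

lemma cont_robots (i : Fin n) : Continuous fun x : ↥(FibProd (fadellNeuwirth d n m)) =>
    robots d n m x i := (continuous_apply _).comp cont_val1

lemma cont_robots' (i : Fin n) : Continuous fun x : ↥(FibProd (fadellNeuwirth d n m)) =>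
    robots' d n m x i := (continuous_apply _).comp cont_val2

lemma cont_obstacles (k : Fin m) : Continuous fun x : ↥(FibProd (fadellNeuwirth d n m)) =>
    obstacles d n m x k := (continuous_apply _).comp cont_val1

lemma cont_pts (α : Fin n ⊕ Fin n ⊕ Fin m) :
    Continuous fun x : ↥(FibProd (fadellNeuwirth d n m)) => pts x α := by
  rcases α with i | i | k
  · exact cont_robots i
  · exact cont_robots' i
  · exact cont_obstacles k

lemma cont_projections (α : Fin n ⊕ Fin n ⊕ Fin m) :
    Continuous fun x : ↥(FibProd (fadellNeuwirth d n m)) => projections d n m e x α := by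
  rcases α with i | i | k
  · exact (cont_robots i).inner continuous_const
  · exact (cont_robots' i).inner continuous_const
  · exact (cont_obstacles k).inner continuous_const

lemma cont_Hgt : Continuous fun x : ↥(FibProd (fadellNeuwirth d n m)) => Hgt f x := by
  by_cases hc : (Finset.univ : Finset (Fin n ⊕ Fin n ⊕ Fin m)).Nonempty
  · unfold Hgt; simp only [dif_pos hc]
    exact (continuous_finset_sup' hc fun α => (cont_pts α).inner continuous_const).add
      continuous_const
  · unfold Hgt; simp only [dif_neg hc]
    exact continuous_const

lemma cont_epsOf (Q : Finset ((Fin n ⊕ Fin n ⊕ Fin m) × (Fin n ⊕ Fin n ⊕ Fin m))) :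
    Continuous fun x : ↥(FibProd (fadellNeuwirth d n m)) => epsOf e Q x := by
  by_cases hQ : Q.Nonempty
  · unfold epsOf; simp only [dif_pos hQ]
    exact (continuous_finset_inf' hQ fun p =>
      ((cont_projections p.1).sub (cont_projections p.2)).abs).div_const _
  · unfold epsOf; simp only [dif_neg hQ]
    exact continuous_const

lemma cont_traj {X : Type*} [TopologicalSpace X] {εg : X → ℝ}
    {xg : X → ↥(FibProd (fadellNeuwirth d n m))} {τ : X → ℝ}
    (hε : Continuous εg) (hx : Continuous xg) (hτ : Continuous τ) (α : Fin (n + m)) :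
    Continuous fun y => trajFun e f (εg y) (xg y) (τ y) α := by
  by_cases hα : (α : ℕ) < n
  · simp only [trajFun, dif_pos hα]
    set i : Fin n := ⟨α.1, hα⟩
    have c1 : Continuous fun y => robots d n m (xg y) i := (cont_robots i).comp hx
    have c2 : Continuous fun y => robots' d n m (xg y) i := (cont_robots' i).comp hx
    have cH : Continuous fun y => Hgt f (xg y) := cont_Hgt.comp hx
    have hw : ∀ k : ℕ, Continuous fun y => wayp e f (εg y) (xg y) i k := by
      intro k
      have hsm : Continuous fun y => (((i : ℝ) + 1) * εg y) • e :=
        (continuous_const.mul hε).smul continuous_const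
      have hsm1 : Continuous fun y =>
          (Hgt f (xg y) + ((i : ℝ) + 1) - ⟪robots d n m (xg y) i, f⟫) • f :=
        ((cH.add continuous_const).sub (c1.inner continuous_const)).smul continuous_const
      have hsm2 : Continuous fun y =>
          (Hgt f (xg y) + ((i : ℝ) + 1) - ⟪robots' d n m (xg y) i, f⟫) • f :=
        ((cH.add continuous_const).sub (c2.inner continuous_const)).smul continuous_const
      match k with
      | 0 => exact c1
      | 1 => exact c1.add hsm
      | 2 => exact (c1.add hsm).add hsm1
      | 3 => exact (c2.add hsm).add hsm2
      | 4 => exact c2.add hsm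
      | (n + 5) => exact c2
    rw [show (fun y => robotTraj e f (εg y) (xg y) i (τ y)) = fun y =>
        wayp e f (εg y) (xg y) i 0 + ∑ k ∈ Finset.range 5,
          (max 0 (min 1 (5 * τ y - k))) • (wayp e f (εg y) (xg y) i (k + 1) -
            wayp e f (εg y) (xg y) i k) from rfl]
    refine (hw 0).add (continuous_finset_sum _ fun k _ => Continuous.smul
        (f := fun y => max 0 (min 1 (5 * τ y - k)))
        (g := fun y => wayp e f (εg y) (xg y) i (k + 1) - wayp e f (εg y) (xg y) i k) ?_
      ((hw (k + 1)).sub (hw k)))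
    exact continuous_const.max (continuous_const.min
      ((continuous_const.mul hτ).sub continuous_const))
  · simp only [trajFun, dif_neg hα]
    exact (continuous_apply α).comp (cont_val1.comp hx)

end Cont

section Sec

variable {d n m : ℕ} {e f : EuclideanSpace ℝ (Fin d)}

lemma trajFun_injective (he : ‖e‖ = 1) (hf : ‖f‖ = 1) (hef : ⟪e, f⟫ = 0) {ε : ℝ}
    (hε : 0 < ε) (x : ↥(FibProd (fadellNeuwirth d n m)))
    (hgap : ∀ α β, projections d n m e x α ≠ projections d n m e x β →
      2 * (n:ℝ) * ε ≤ |projections d n m e x α - projections d n m e x β|)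
    {t : ℝ} (ht0 : 0 ≤ t) (ht1 : t ≤ 1) :
    Function.Injective (trajFun e f ε x t) := by
  obtain ⟨kn, s, hkn, hs0, hs1, hseg⟩ := exists_segment (d := d) (n := n) (m := m) e f ht0 ht1
  intro α β hαβ
  unfold trajFun at hαβ
  split_ifs at hαβ with h1 h2 h2
  · rw [hseg ε x ⟨α.1, h1⟩, hseg ε x ⟨β.1, h2⟩] at hαβ
    have h3 := seg_rr he hf hef hε x hgap hkn hs0 hs1 hαβ
    exact Fin.ext (congrArg (fun z : Fin n => z.val) h3)
  · exfalso
    have hβn : n ≤ β.1 := le_of_not_gt h2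
    have hβ : x.1.1.1 β = obstacles d n m x ⟨β.1 - n, by have := β.2; omega⟩ := by
      rw [obstacles, natAdd_sub β hβn]
    rw [hseg ε x ⟨α.1, h1⟩, hβ] at hαβ
    exact seg_ro he hf hef hε x hgap hkn hs0 hs1 _ _ hαβ
  · exfalso
    have hαn : n ≤ α.1 := le_of_not_gt h1
    have hα : x.1.1.1 α = obstacles d n m x ⟨α.1 - n, by have := α.2; omega⟩ := by
      rw [obstacles, natAdd_sub α hαn]
    rw [hseg ε x ⟨β.1, h2⟩, hα] at hαβ
    exact seg_ro he hf hef hε x hgap hkn hs0 hs1 _ _ hαβ.symm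
  · exact x.1.1.2 hαβ

lemma eps_spec (hn : 0 < n) (e : EuclideanSpace ℝ (Fin d))
    (x : ↥(FibProd (fadellNeuwirth d n m))) :
    0 < eps e x ∧ ∀ α β, projections d n m e x α ≠ projections d n m e x β →
      2 * (n:ℝ) * eps e x ≤ |projections d n m e x α - projections d n m e x β| :=
  ⟨eps_pos e hn x, fun _ _ h => eps_gap e x h⟩

lemma trajFun_zero (ε : ℝ) (x : ↥(FibProd (fadellNeuwirth d n m))) :
    trajFun e f ε x 0 = x.1.1.1 := by
  funext α
  rw [trajFun]
  split_ifs with h1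
  · rw [robotTraj_zero, robots, castAdd_mk α h1]
  · rfl

lemma trajFun_one (ε : ℝ) (x : ↥(FibProd (fadellNeuwirth d n m))) :
    trajFun e f ε x 1 = x.1.2.1 := by
  funext α
  rw [trajFun]
  split_ifs with h1
  · rw [robotTraj_one, robots', castAdd_mk α h1]
  · have hαn : n ≤ α.1 := le_of_not_gt h1
    rw [← natAdd_sub α hαn]
    exact obst_compat x _

lemma trajFun_vert (ε : ℝ) (x : ↥(FibProd (fadellNeuwirth d n m))) (t : ℝ) (j : Fin m) :
    trajFun e f ε x t (Fin.natAdd n j) = x.1.1.1 (Fin.natAdd n j) := by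
  rw [trajFun]
  exact dif_neg (by simp [Fin.natAdd])

/-- The motion-planning section, defined globally on `E ×_B E`. -/
noncomputable def theSec (hn : 0 < n) (he : ‖e‖ = 1) (hf : ‖f‖ = 1) (hef : ⟪e, f⟫ = 0)
    (x : ↥(FibProd (fadellNeuwirth d n m))) : ↥(VertPaths (fadellNeuwirth d n m)) := by
  refine ⟨⟨fun t => ⟨trajFun e f (eps e x) x t, ?_⟩, ?_⟩, ?_⟩
  · exact trajFun_injective he hf hef (eps_pos e hn x) x
      (fun _ _ h => eps_gap e x h) t.2.1 t.2.2
  · refine Continuous.subtype_mk ?_ _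
    refine continuous_pi fun α => ?_
    exact cont_traj continuous_const continuous_const continuous_subtype_val α
  · intro t
    show fadellNeuwirth d n m ⟨_, _⟩ = fadellNeuwirth d n m ⟨_, _⟩
    apply Subtype.ext
    funext j
    show trajFun e f (eps e x) x t (Fin.natAdd n j) =
      trajFun e f (eps e x) x ((0 : unitInterval) : ℝ) (Fin.natAdd n j)
    rw [trajFun_vert, trajFun_vert]

lemma theSec_zero (hn : 0 < n) (he : ‖e‖ = 1) (hf : ‖f‖ = 1) (hef : ⟪e, f⟫ = 0)
    (x : ↥(FibProd (fadellNeuwirth d n m))) :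
    ((theSec hn he hf hef x : C(unitInterval, ↥(Conf (EuclideanSpace ℝ (Fin d)) (n + m)))) 0
      : ↥(Conf (EuclideanSpace ℝ (Fin d)) (n + m))) = x.1.1 := by
  apply Subtype.ext
  show trajFun e f (eps e x) x ((0 : unitInterval) : ℝ) = x.1.1.1
  rw [show ((0 : unitInterval) : ℝ) = 0 from rfl, trajFun_zero]

lemma theSec_one (hn : 0 < n) (he : ‖e‖ = 1) (hf : ‖f‖ = 1) (hef : ⟪e, f⟫ = 0)
    (x : ↥(FibProd (fadellNeuwirth d n m))) :
    ((theSec hn he hf hef x : C(unitInterval, ↥(Conf (EuclideanSpace ℝ (Fin d)) (n + m)))) 1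
      : ↥(Conf (EuclideanSpace ℝ (Fin d)) (n + m))) = x.1.2 := by
  apply Subtype.ext
  show trajFun e f (eps e x) x ((1 : unitInterval) : ℝ) = x.1.2.1
  rw [show ((1 : unitInterval) : ℝ) = 1 from rfl, trajFun_one]

end Sec

section Comb

variable {d n m : ℕ} (e : EuclideanSpace ℝ (Fin d))

lemma ncard_range {γ : Type*} [Fintype γ] (g : γ → ℝ) :
    (Set.range g).ncard = (Finset.univ.image g).card := by
  rw [← Set.ncard_coe_finset]
  congr 1
  rw [Finset.coe_image, Finset.coe_univ, Set.image_univ]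

lemma total_of_mem {c : ℕ} {x : ↥(FibProd (fadellNeuwirth d n m))}
    (hx : x ∈ aggregate d n m e c) :
    (Finset.univ.image (projections d n m e x)).card = c := by
  rw [aggregate] at hx
  simp only [Set.mem_iUnion] at hx
  obtain ⟨j, t, ⟨hjt, -, -, -⟩, hx⟩ := hx
  have h1 := hx.1
  rw [ncard_range] at h1
  omega

lemma mem_aggregate_card (hm : 0 < m) (x : ↥(FibProd (fadellNeuwirth d n m))) :
    1 ≤ (Finset.univ.image (projections d n m e x)).card ∧
    (Finset.univ.image (projections d n m e x)).card ≤ 2 * n + m ∧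
    x ∈ aggregate d n m e ((Finset.univ.image (projections d n m e x)).card) := by
  set T : Finset ℝ := Finset.univ.image (fun k : Fin m => ⟪obstacles d n m x k, e⟫) with hT
  set S : Finset ℝ := Finset.univ.image (projections d n m e x) with hS
  have hmne : (Finset.univ : Finset (Fin m)).Nonempty := ⟨⟨0, hm⟩, Finset.mem_univ _⟩
  have ht1 : 1 ≤ T.card := Finset.card_pos.mpr (hmne.image _)
  have htm : T.card ≤ m := le_trans Finset.card_image_le (by simp)
  have hTS : T ⊆ S := by
    intro a ha
    rw [hT, Finset.mem_image] at ha
    obtain ⟨k, -, rfl⟩ := ha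
    rw [hS, Finset.mem_image]
    exact ⟨Sum.inr (Sum.inr k), Finset.mem_univ _, rfl⟩
  have htc : T.card ≤ S.card := Finset.card_le_card hTS
  have hcS : S.card ≤ 2 * n + T.card := by
    have hsub : S ⊆ (Finset.univ.image (fun i : Fin n => ⟪robots d n m x i, e⟫)) ∪
        ((Finset.univ.image (fun i : Fin n => ⟪robots' d n m x i, e⟫)) ∪ T) := by
      intro a ha
      rw [hS, Finset.mem_image] at ha
      obtain ⟨α, -, rfl⟩ := ha
      rcases α with i | i | k
      · exact Finset.mem_union_left _ (Finset.mem_image.mpr ⟨i, Finset.mem_univ _, rfl⟩)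
      · exact Finset.mem_union_right _
          (Finset.mem_union_left _ (Finset.mem_image.mpr ⟨i, Finset.mem_univ _, rfl⟩))
      · exact Finset.mem_union_right _
          (Finset.mem_union_right _ (Finset.mem_image.mpr ⟨k, Finset.mem_univ _, rfl⟩))
    have h1 := Finset.card_le_card hsub
    have h2 := Finset.card_union_le
      (Finset.univ.image (fun i : Fin n => ⟪robots d n m x i, e⟫))
      ((Finset.univ.image (fun i : Fin n => ⟪robots' d n m x i, e⟫)) ∪ T)
    have h3 := Finset.card_union_le
      (Finset.univ.image (fun i : Fin n => ⟪robots' d n m x i, e⟫)) T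
    have h4 : (Finset.univ.image (fun i : Fin n => ⟪robots d n m x i, e⟫)).card ≤ n :=
      le_trans Finset.card_image_le (by simp)
    have h5 : (Finset.univ.image (fun i : Fin n => ⟪robots' d n m x i, e⟫)).card ≤ n :=
      le_trans Finset.card_image_le (by simp)
    omega
  refine ⟨le_trans ht1 htc, by omega, ?_⟩
  rw [aggregate]
  simp only [Set.mem_iUnion]
  refine ⟨S.card - T.card, T.card, ⟨by omega, by omega, ht1, htm⟩, ?_, ?_⟩
  · rw [ncard_range, ← hS]
    omega
  · rw [ncard_range, ← hT]

/-- Local constancy of the coincidence pattern on each `W_c`. -/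
lemma Qset_eq {c : ℕ} {x₀ x : ↥(FibProd (fadellNeuwirth d n m))}
    (h₀ : (Finset.univ.image (projections d n m e x₀)).card = c)
    (h : (Finset.univ.image (projections d n m e x)).card = c)
    (hQ : ∀ p ∈ Qset e x₀,
      projections d n m e x p.1 ≠ projections d n m e x p.2) :
    Qset e x = Qset e x₀ := by
  set v : (Fin n ⊕ Fin n ⊕ Fin m) → ℝ := projections d n m e x with hv
  set v₀ : (Fin n ⊕ Fin n ⊕ Fin m) → ℝ := projections d n m e x₀ with hv₀
  set u : (Fin n ⊕ Fin n ⊕ Fin m) → ℝ × ℝ := fun γ => (v γ, v₀ γ) with hu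
  set K := Finset.univ.image u with hK
  have hmemK : ∀ γ, u γ ∈ K := fun γ => Finset.mem_image.mpr ⟨γ, Finset.mem_univ _, rfl⟩
  have hfst : Set.InjOn Prod.fst (K : Set (ℝ × ℝ)) := by
    intro a ha b hb hab
    rw [hK, Finset.coe_image, Set.mem_image] at ha hb
    obtain ⟨γ, -, rfl⟩ := ha
    obtain ⟨δ, -, rfl⟩ := hb
    have h2 : v₀ γ = v₀ δ := by
      by_contra hne
      exact hQ (γ, δ) (Finset.mem_filter.mpr ⟨Finset.mem_univ _, hne⟩) hab
    exact Prod.ext hab h2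
  have hKfst : K.image Prod.fst = Finset.univ.image v := by
    rw [hK, Finset.image_image]
    rfl
  have hKsnd : K.image Prod.snd = Finset.univ.image v₀ := by
    rw [hK, Finset.image_image]
    rfl
  have hKcard : K.card = c := by
    have := Finset.card_image_iff.mpr hfst
    rw [hKfst] at this
    rw [← this]
    exact h
  have hsnd : Set.InjOn Prod.snd (K : Set (ℝ × ℝ)) := by
    apply Finset.card_image_iff.mp
    rw [hKsnd, hKcard]
    exact h₀
  ext p
  simp only [Qset, Finset.mem_filter, Finset.mem_univ, true_and]
  constructor
  · intro hvp h0p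
    apply hvp
    have := hsnd (Finset.mem_coe.mpr (hmemK p.1)) (Finset.mem_coe.mpr (hmemK p.2)) (by exact h0p)
    exact congrArg Prod.fst this
  · intro h0p
    exact hQ (p.1, p.2) (Finset.mem_filter.mpr ⟨Finset.mem_univ _, h0p⟩)

/-- Continuity of the glued desingularization scale on each `W_c`. -/
lemma cont_eps_on (c : ℕ) :
    Continuous fun y : ↥(aggregate d n m e c) => eps e y.1 := by
  rw [continuous_iff_continuousAt]
  intro y₀
  set O : Set ↥(FibProd (fadellNeuwirth d n m)) :=
    {x | ∀ p ∈ Qset e y₀.1, projections d n m e x p.1 ≠ projections d n m e x p.2} with hOdef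
  have hO : IsOpen O := by
    have hO2 : O = ⋂ p ∈ Qset e y₀.1,
        {x : ↥(FibProd (fadellNeuwirth d n m)) |
          projections d n m e x p.1 = projections d n m e x p.2}ᶜ := by
      ext x
      simp [hOdef]
    rw [hO2]
    exact isOpen_biInter_finset fun p _ =>
      (isClosed_eq (cont_projections p.1) (cont_projections p.2)).isOpen_compl
  have hmem : y₀ ∈ Subtype.val ⁻¹' O := by
    intro p hp
    exact (Finset.mem_filter.mp hp).2
  have hnhds : Subtype.val ⁻¹' O ∈ nhds y₀ :=
    (hO.preimage continuous_subtype_val).mem_nhds hmem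
  refine ContinuousAt.congr
    (f := fun y : ↥(aggregate d n m e c) => epsOf e (Qset e y₀.1) y.1) ?_ ?_
  · exact ((cont_epsOf _).comp continuous_subtype_val).continuousAt
  · refine Filter.eventuallyEq_of_mem hnhds fun y hy => ?_
    show epsOf e (Qset e y₀.1) y.1 = eps e y.1
    rw [eps, Qset_eq e (total_of_mem e y₀.2) (total_of_mem e y.2) hy]

end Comb

section SecOn

variable {d n m : ℕ} (e f : EuclideanSpace ℝ (Fin d))

lemma paramSecOn_aggregate (hn : 0 < n) (he : ‖e‖ = 1) (hf : ‖f‖ = 1) (hef : ⟪e, f⟫ = 0)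
    (c : ℕ) : ParamSecOn (fadellNeuwirth d n m) (aggregate d n m e c) := by
  refine ⟨fun y => theSec hn he hf hef y.1, ?_, ?_⟩
  · apply continuous_induced_rng.mpr
    apply ContinuousMap.continuous_of_continuous_uncurry
    apply continuous_induced_rng.mpr
    show Continuous fun q : ↥(aggregate d n m e c) × unitInterval =>
      trajFun e f (eps e q.1.1) q.1.1 (q.2 : ℝ)
    refine continuous_pi fun α => ?_
    exact cont_traj ((cont_eps_on e c).comp continuous_fst)
      (continuous_subtype_val.comp continuous_fst)
      (continuous_subtype_val.comp continuous_snd) α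
  · intro y
    exact ⟨theSec_zero hn he hf hef y.1, theSec_one hn he hf hef y.1⟩

end SecOn
/-- **Statement 14.** For every `d ≥ 2`, `n ≥ 1`, `m ≥ 1` there is a parametrized motion
planning algorithm for the Fadell–Neuwirth fibration `p : F(ℝ^d, n+m) → F(ℝ^d, m)` whose
domains of continuity are the `2n + m` sets `W_c = ⋃_{j+t=c} A_{j,t}`, `c = 1, …, 2n+m`,
partitioning `E ×_B E`: the sets `W_c` are pairwise disjoint, cover `E ×_B E`, and over
each of them the fibration `Π` admits a continuous section. Consequently
`TC[p : F(ℝ^d, n+m) → F(ℝ^d, m)] ≤ 2n + m - 1`. -/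
theorem exists_parametrized_motion_planner (hd : 2 ≤ d) (hn : 1 ≤ n) (hm : 1 ≤ m)
    (he : ‖e‖ = 1) :
    (⋃ c ∈ Finset.Icc 1 (2 * n + m), aggregate d n m e c) = Set.univ ∧
    (∀ c c' : ℕ, c ≠ c' → Disjoint (aggregate d n m e c) (aggregate d n m e c')) ∧
    (∀ c : ℕ, ParamSecOn (fadellNeuwirth d n m) (aggregate d n m e c)) ∧
    parTC (fadellNeuwirth d n m) ≤ 2 * n + m - 1 := by
  -- produce a unit vector `f` orthogonal to `e`
  have hene : e ≠ 0 := by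
    intro h
    rw [h, norm_zero] at he
    norm_num at he
  have hspan : (Submodule.span ℝ {e})ᗮ ≠ ⊥ := by
    intro hbot
    rw [Submodule.orthogonal_eq_bot_iff] at hbot
    have h1 : Module.finrank ℝ (Submodule.span ℝ {e}) = 1 := finrank_span_singleton hene
    have h2 : Module.finrank ℝ (EuclideanSpace ℝ (Fin d)) = d := finrank_euclideanSpace_fin
    rw [hbot, finrank_top] at h1
    omega
  obtain ⟨v, hv, hvne⟩ := Submodule.exists_mem_ne_zero_of_ne_bot hspan
  set f : EuclideanSpace ℝ (Fin d) := (‖v‖)⁻¹ • v with hfdef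
  have hf : ‖f‖ = 1 := by
    rw [hfdef, norm_smul, norm_inv, norm_norm,
      inv_mul_cancel₀ (norm_ne_zero_iff.mpr hvne)]
  have hef : ⟪e, f⟫ = 0 := by
    have h3 : ⟪e, v⟫ = 0 :=
      (Submodule.mem_orthogonal _ v).mp hv e (Submodule.mem_span_singleton_self e)
    rw [hfdef, real_inner_smul_right, h3, mul_zero]
  have hn0 : 0 < n := hn
  have hm0 : 0 < m := hm
  have hdisj : ∀ c c' : ℕ, c ≠ c' →
      Disjoint (aggregate d n m e c) (aggregate d n m e c') := by
    intro c c' hcc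
    rw [Set.disjoint_left]
    intro x hx hx'
    exact hcc ((total_of_mem e hx).symm.trans (total_of_mem e hx'))
  have hsec : ∀ c : ℕ, ParamSecOn (fadellNeuwirth d n m) (aggregate d n m e c) :=
    fun c => paramSecOn_aggregate e f hn0 he hf hef c
  refine ⟨?_, hdisj, hsec, ?_⟩
  · apply Set.eq_univ_iff_forall.mpr
    intro x
    obtain ⟨h1, h2, h3⟩ := mem_aggregate_card e hm0 x
    simp only [Set.mem_iUnion]
    exact ⟨_, Finset.mem_Icc.mpr ⟨h1, h2⟩, h3⟩
  · apply Nat.sInf_le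
    refine ⟨fun i => aggregate d n m e (i.1 + 1), ?_, ?_, ?_⟩
    · apply Set.eq_univ_iff_forall.mpr
      intro x
      obtain ⟨h1, h2, h3⟩ := mem_aggregate_card e hm0 x
      simp only [Set.mem_iUnion]
      refine ⟨⟨(Finset.univ.image (projections d n m e x)).card - 1, by omega⟩, ?_⟩
      show x ∈ aggregate d n m e ((Finset.univ.image (projections d n m e x)).card - 1 + 1)
      rw [show (Finset.univ.image (projections d n m e x)).card - 1 + 1 =
        (Finset.univ.image (projections d n m e x)).card by omega]
      exact h3
    · intro i j hij
      exact hdisj (i.1 + 1) (j.1 + 1) (fun h => hij (Fin.ext (by omega)))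
    · intro i
      exact hsec (i.1 + 1)

end FadellNeuwirthAlgorithm
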